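/- Let A be an abelian category and f• : h• → h'• a morphism of isosequentiable families in A. For each n, let P_n be the pullback of f̲_n : Cod(h_n) → Cod(h'_n) along h'_n : Dom(h'_n) → Cod(h'_n), let h^P_n = ⟨h_n, f̄_n⟩ : Dom(h_n) → P_n, let π_n : P_n → Cod(h_n) be the pullback projection, let C(π)_n : Cok(h^P_n) → Cok(h_n) be the arrow induced on cokernels, let K(f)_n : Ker(h_n) → Ker(h'_n) be the arrow induced on kernels, and let δ_n : Ker(h'_n) → Cok(h^P_n) be the composite of ⟨0, k'_n⟩ : Ker(h'_n) → P_n (where k'_n : Ker(h'_n) → Dom(h'_n)) with the cokernel projection of h^P_n. Then the three-periodic long sequence ... → Cok(h^P_{n+1}) →^{C(π)_{n+1}} Cok(h_{n+1}) →^{i_n·K(f)_n} Ker(h'_n) →^{δ_n} Cok(h^P_n) →^{C(π)_n} Cok(h_n) → ... is exact at every term. -/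

import Mathlib

open CategoryTheory CategoryTheory.Limits

noncomputable section

universe v u

variable (A : Type u) [Category.{v} A] [HasZeroMorphisms A] [HasKernels A] [HasCokernels A]

/-- A sequentiable family of arrows in `A`: arrows `h n : Dom n ⟶ Cod n` (for `n : ℤ`)
together with connecting arrows `i n : Cok(h (n+1)) ⟶ Ker(h n)`. -/
structure SeqFam where
  Dom : ℤ → A
  Cod : ℤ → A
  h : ∀ n : ℤ, Dom n ⟶ Cod n
  i : ∀ n : ℤ, cokernel (h (n + 1)) ⟶ kernel (h n)

variable {A}

/-- A morphism of sequentiable families. -/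
@[ext]
structure SeqHom (F G : SeqFam A) where
  fDom : ∀ n : ℤ, F.Dom n ⟶ G.Dom n
  fCod : ∀ n : ℤ, F.Cod n ⟶ G.Cod n
  comm : ∀ n : ℤ, F.h n ≫ fCod n = fDom n ≫ G.h n
  compat : ∀ n : ℤ,
    cokernel.map (F.h (n+1)) (G.h (n+1)) (fDom (n+1)) (fCod (n+1)) (comm (n+1)) ≫ G.i n
      = F.i n ≫ kernel.map (F.h n) (G.h n) (fDom n) (fCod n) (comm n)

section Defs
variable [HasPullbacks A] {F G : SeqFam A}

/-- The pullback `P n` of `f̲ n` along `h' n`. -/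
def pObj (f : SeqHom F G) (n : ℤ) : A := pullback (f.fCod n) (G.h n)

/-- The comparison `h^P n = ⟨h n, f̄ n⟩ : Dom(h n) ⟶ P n`. -/
def hP (f : SeqHom F G) (n : ℤ) : F.Dom n ⟶ pObj f n :=
  pullback.lift (F.h n) (f.fDom n) (f.comm n)

/-- `C(π) n : Cok(h^P n) ⟶ Cok(h n)`, induced by the pullback projection `π n`. -/
def Cpi (f : SeqHom F G) (n : ℤ) : cokernel (hP f n) ⟶ cokernel (F.h n) :=
  cokernel.map (hP f n) (F.h n) (𝟙 _) (pullback.fst (f.fCod n) (G.h n)) (by rw [Category.id_comp]; exact pullback.lift_fst _ _ _)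

/-- `K(f) n : Ker(h n) ⟶ Ker(h' n)`, induced by `f`. -/
def Kf (f : SeqHom F G) (n : ℤ) : kernel (F.h n) ⟶ kernel (G.h n) :=
  kernel.map (F.h n) (G.h n) (f.fDom n) (f.fCod n) (f.comm n)

/-- `δ n = ⟨0, k' n⟩ ≫ (cokernel projection of h^P n) : Ker(h' n) ⟶ Cok(h^P n)`. -/
def del (f : SeqHom F G) (n : ℤ) : kernel (G.h n) ⟶ cokernel (hP f n) :=
  pullback.lift 0 (kernel.ι (G.h n)) (by simp) ≫ cokernel.π (hP f n)

end Defs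

attribute [simp] pullback.lift_fst pullback.lift_snd pullback.lift_fst_assoc pullback.lift_snd_assoc

attribute [reducible] pObj

section AuxLemmas

open CategoryTheory.Abelian Pseudoelement

variable {C : Type u} [Category.{v} C] [Abelian C]

/-- `⟨0, kernel.ι g⟩ : kernel g ⟶ pullback f g` is a kernel of `pullback.fst f g`. -/
noncomputable def pullbackFstKernelIsLimit {X Y Z : C} (f : X ⟶ Z) (g : Y ⟶ Z) :
    IsLimit (KernelFork.ofι (pullback.lift (0 : kernel g ⟶ X) (kernel.ι g) (by simp))
      (show _ ≫ pullback.fst f g = 0 by simp)) := by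
  have : Mono (pullback.lift (0 : kernel g ⟶ X) (kernel.ι g)
      (by simp : (0 : kernel g ⟶ X) ≫ f = kernel.ι g ≫ g)) := by
    apply mono_of_mono_fac (pullback.lift_snd _ _ _)
  refine KernelFork.IsLimit.ofι' _ _ (fun {W} t ht => ⟨kernel.lift g (t ≫ pullback.snd f g)
    (by rw [Category.assoc, ← pullback.condition, ← Category.assoc, ht, zero_comp]), ?_⟩)
  apply pullback.hom_ext
  · simp [ht]
  · simp

lemma pullbackFst_exact {X Y Z : C} (f : X ⟶ Z) (g : Y ⟶ Z) :
    (ShortComplex.mk (pullback.lift (0 : kernel g ⟶ X) (kernel.ι g) (by simp))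
      (pullback.fst f g) (by simp)).Exact :=
  ShortComplex.exact_of_f_is_kernel _ (pullbackFstKernelIsLimit f g)

end AuxLemmas

/-- **Statement 9** (The three-periodic long sequence associated with a morphism of
isosequentiable families in an abelian category is exact at every term). -/
theorem seq_long_sequence_exact
    (A : Type u) [Category.{v} A] [Abelian A]
    (F G : SeqFam A) (f : SeqHom F G)
    (hFiso : ∀ n : ℤ, IsIso (F.i n)) (hGiso : ∀ n : ℤ, IsIso (G.i n)) :
    ∀ n : ℤ,
      (∃ w : Cpi f (n+1) ≫ (F.i n ≫ Kf f n) = 0, (ShortComplex.mk _ _ w).Exact) ∧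
      (∃ w : (F.i n ≫ Kf f n) ≫ del f n = 0, (ShortComplex.mk _ _ w).Exact) ∧
      (∃ w : del f n ≫ Cpi f n = 0, (ShortComplex.mk _ _ w).Exact) := by
  open CategoryTheory.Abelian Pseudoelement in
  intro n
  haveI := hFiso n
  haveI := hGiso n
  -- notation
  set m : ℤ := n + 1 with hm
  -- basic morphism-level identities
  have hCpi : ∀ k : ℤ, cokernel.π (hP f k) ≫ Cpi f k
      = pullback.fst (f.fCod k) (G.h k) ≫ cokernel.π (F.h k) := by
    intro k; simp [Cpi]
  have hu0 : ∀ k : ℤ, (pullback.lift (0 : kernel (G.h k) ⟶ F.Cod k) (kernel.ι (G.h k))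
      (by simp) : kernel (G.h k) ⟶ pObj f k) ≫ pullback.fst (f.fCod k) (G.h k) = 0 := by
    intro k; simp
  -- the compatibility in the convenient direction
  have hcompat : F.i n ≫ Kf f n
      = cokernel.map (F.h m) (G.h m) (f.fDom m) (f.fCod m) (f.comm m) ≫ G.i n := by
    rw [Kf]; exact (f.compat n).symm
  ------------------------------------------------------------------
  -- (1) exactness at `Cok (F.h m)`
  ------------------------------------------------------------------
  have w1 : Cpi f m ≫ (F.i n ≫ Kf f n) = 0 := by
    rw [hcompat, ← Category.assoc]
    have : Cpi f m ≫ cokernel.map (F.h m) (G.h m) (f.fDom m) (f.fCod m) (f.comm m) = 0 := by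
      apply coequalizer.hom_ext
      simp only [cokernel.π_desc, comp_zero]
      rw [reassoc_of% (hCpi m)]
      simp [pullback.condition_assoc]
    rw [this, zero_comp]
  refine ⟨⟨w1, ?_⟩, ?_, ?_⟩
  · apply Pseudoelement.exact_of_pseudo_exact
    intro b hb
    dsimp only [ShortComplex.mk] at hb ⊢
    -- from hb : (F.i n ≫ Kf f n) b = 0, deduce Cf b = 0
    have hb' : (cokernel.map (F.h m) (G.h m) (f.fDom m) (f.fCod m) (f.comm m)) b = 0 := by
      apply pseudo_injective_of_mono (G.i n)
      rw [← Pseudoelement.comp_apply, ← hcompat, hb, apply_zero]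
    -- write b as class of some c
    obtain ⟨c, hc⟩ := pseudo_surjective_of_epi (cokernel.π (F.h m)) b
    have hc' : (cokernel.π (G.h m)) ((f.fCod m) c) = 0 := by
      rw [← Pseudoelement.comp_apply, ← cokernel.π_desc (F.h m) (f.fCod m ≫ cokernel.π (G.h m))
        (by rw [← Category.assoc, f.comm m, Category.assoc, cokernel.condition, comp_zero])]
      rw [Pseudoelement.comp_apply, hc]
      rw [show cokernel.desc (F.h m) (f.fCod m ≫ cokernel.π (G.h m)) _
        = cokernel.map (F.h m) (G.h m) (f.fDom m) (f.fCod m) (f.comm m) by simp [cokernel.map]]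
      exact hb'
    obtain ⟨d, hd⟩ := pseudo_exact_of_exact (ShortComplex.exact_cokernel (G.h m)) _ hc'
    obtain ⟨s, hs1, _⟩ := pseudo_pullback (p := c) (q := d)
      (f := f.fCod m) (g := G.h m) hd.symm
    refine ⟨(cokernel.π (hP f m)) s, ?_⟩
    rw [← Pseudoelement.comp_apply, hCpi m, Pseudoelement.comp_apply, hs1, hc]
  ------------------------------------------------------------------
  -- (2) exactness at `Ker (G.h n)`
  ------------------------------------------------------------------
  · have hKfu : Kf f n ≫ (pullback.lift (0 : kernel (G.h n) ⟶ F.Cod n) (kernel.ι (G.h n))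
        (by simp)) = kernel.ι (F.h n) ≫ hP f n := by
      apply pullback.hom_ext <;> simp [Kf, hP]
    have w2 : (F.i n ≫ Kf f n) ≫ del f n = 0 := by
      rw [del, Category.assoc, reassoc_of% hKfu]
      simp
    refine ⟨w2, ?_⟩
    apply Pseudoelement.exact_of_pseudo_exact
    intro b hb
    dsimp only [ShortComplex.mk] at hb ⊢
    have hb' : (cokernel.π (hP f n)) ((pullback.lift (0 : kernel (G.h n) ⟶ F.Cod n)
        (kernel.ι (G.h n)) (by simp)) b) = 0 := by
      rw [← Pseudoelement.comp_apply, ← del]; exact hb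
    obtain ⟨a, ha⟩ := pseudo_exact_of_exact (ShortComplex.exact_cokernel (hP f n)) _ hb'
    have hfst : (F.h n) a = 0 := by
      have h1 : (pullback.fst (f.fCod n) (G.h n)) ((hP f n) a) = (F.h n) a := by
        rw [← Pseudoelement.comp_apply, hP, pullback.lift_fst]
      rw [← h1, ha, ← Pseudoelement.comp_apply, hu0 n, Pseudoelement.zero_apply]
    obtain ⟨a', ha'⟩ := pseudo_exact_of_exact (ShortComplex.exact_kernel (F.h n)) _ hfst
    have hKf : (Kf f n) a' = b := by
      apply pseudo_injective_of_mono (kernel.ι (G.h n))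
      have h1 : (kernel.ι (G.h n)) ((Kf f n) a') = (f.fDom n) a := by
        rw [← Pseudoelement.comp_apply, show Kf f n ≫ kernel.ι (G.h n) = kernel.ι (F.h n) ≫ f.fDom n by
          simp [Kf], Pseudoelement.comp_apply, ha']
      have h2 : (pullback.snd (f.fCod n) (G.h n)) ((hP f n) a) = (f.fDom n) a := by
        rw [← Pseudoelement.comp_apply, hP, pullback.lift_snd]
      have h3 : (pullback.snd (f.fCod n) (G.h n)) ((pullback.lift (0 : kernel (G.h n) ⟶ F.Cod n)
          (kernel.ι (G.h n)) (by simp) : kernel (G.h n) ⟶ pObj f n) b)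
          = (kernel.ι (G.h n)) b := by
        rw [← Pseudoelement.comp_apply, pullback.lift_snd]
      rw [h1, ← h3, ← ha, h2]
    obtain ⟨c, hcc⟩ := pseudo_surjective_of_epi (F.i n) a'
    exact ⟨c, by rw [Pseudoelement.comp_apply, hcc, hKf]⟩
  ------------------------------------------------------------------
  -- (3) exactness at `Cok (hP f n)`
  ------------------------------------------------------------------
  · have w3 : del f n ≫ Cpi f n = 0 := by
      rw [del, Category.assoc, hCpi n, reassoc_of% (hu0 n), zero_comp]
    refine ⟨w3, ?_⟩
    apply Pseudoelement.exact_of_pseudo_exact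
    intro b hb
    dsimp only [ShortComplex.mk] at hb ⊢
    obtain ⟨s, hs⟩ := pseudo_surjective_of_epi (cokernel.π (hP f n)) b
    have hfst : (cokernel.π (F.h n)) ((pullback.fst (f.fCod n) (G.h n)) s) = 0 := by
      rw [← Pseudoelement.comp_apply, ← hCpi n, Pseudoelement.comp_apply, hs]; exact hb
    obtain ⟨a, ha⟩ := pseudo_exact_of_exact (ShortComplex.exact_cokernel (F.h n)) _ hfst
    have heq : (pullback.fst (f.fCod n) (G.h n)) s
        = (pullback.fst (f.fCod n) (G.h n)) ((hP f n) a) := by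
      rw [← Pseudoelement.comp_apply, hP, pullback.lift_fst, ha]
    obtain ⟨z, hz0, hzs⟩ := sub_of_eq_image (pullback.fst (f.fCod n) (G.h n)) s ((hP f n) a) heq
    have hzb : (cokernel.π (hP f n)) z = b := by
      rw [hzs _ (cokernel.π (hP f n)) (by rw [← Pseudoelement.comp_apply, cokernel.condition, Pseudoelement.zero_apply]), hs]
    obtain ⟨b', hb'⟩ := pseudo_exact_of_exact (pullbackFst_exact (f.fCod n) (G.h n)) _ hz0
    refine ⟨b', ?_⟩
    rw [del, Pseudoelement.comp_apply, hb', hzb]
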